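/- Let Λ = ℤℓ[[T]] and let X be a finitely generated torsion Λ-module whose characteristic power series χ satisfies χ(0) ≠ 0. Then X is finite if and only if its Herbrand quotient q(X) = |X[T]|/|X/TX| equals 1. -/

import Mathlib

open Submodule LinearMap

section Herbrand

variable {R M E : Type*} [CommRing R] [AddCommGroup M] [Module R M]
  [AddCommGroup E] [Module R E]

private lemma card_map_mkQ' (S T : Submodule R M) :
    Nat.card (S.map T.mkQ) = Nat.card (S ⧸ T.comap S.subtype) := by
  have h1 : range (T.mkQ.comp S.subtype) = S.map T.mkQ := by
    rw [range_comp, range_subtype]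
  have h2 : ker (T.mkQ.comp S.subtype) = T.comap S.subtype := by
    rw [ker_comp, ker_mkQ]
  refine (Nat.card_congr ?_).symm
  exact ((Submodule.quotEquivOfEq _ _ h2.symm).trans
    ((LinearMap.quotKerEquivRange (T.mkQ.comp S.subtype)).trans
      (LinearEquiv.ofEq _ _ h1))).toEquiv

private lemma card_quot_quot' {S T : Submodule R M} (hST : T ≤ S) :
    Nat.card (M ⧸ T) = Nat.card (S ⧸ T.comap S.subtype) * Nat.card (M ⧸ S) := by
  rw [← Submodule.card_quotient_mul_card_quotient S T hST, card_map_mkQ']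

private lemma herbrand_of_finite' [Finite M] (g : M →ₗ[R] M) :
    Nat.card (ker g) = Nat.card (M ⧸ range g) := by
  have h1 := Submodule.card_eq_card_quotient_mul_card (ker g)
  have h2 := Submodule.card_eq_card_quotient_mul_card (range g)
  have h3 : Nat.card (M ⧸ ker g) = Nat.card (range g) :=
    Nat.card_congr (LinearMap.quotKerEquivRange g).toEquiv
  have hpos : 0 < Nat.card (range g) := Nat.card_pos
  apply Nat.eq_of_mul_eq_mul_left hpos
  calc Nat.card (range g) * Nat.card (ker g)
      = Nat.card (ker g) * Nat.card (M ⧸ ker g) := by rw [h3, mul_comm]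
    _ = Nat.card (range g) * Nat.card (M ⧸ range g) := by rw [← h1, ← h2]

private lemma ker_lsmul_le_ker (t : R) (f : M →ₗ[R] E)
    (hinj : Function.Injective (LinearMap.lsmul R E t)) :
    ker (LinearMap.lsmul R M t) ≤ ker f := by
  intro x hx
  rw [mem_ker] at hx ⊢
  apply hinj
  rw [map_zero, lsmul_apply, ← map_smul]
  rw [lsmul_apply] at hx
  rw [hx, map_zero]

private lemma herbrand_card (t : R) (f : M →ₗ[R] E)
    (hK : Finite (LinearMap.ker f)) (hC : Finite (E ⧸ LinearMap.range f))
    (hinj : Function.Injective (LinearMap.lsmul R E t)) :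
    Nat.card (M ⧸ LinearMap.range (LinearMap.lsmul R M t)) =
      Nat.card (LinearMap.ker (LinearMap.lsmul R M t)) *
        Nat.card (E ⧸ LinearMap.range (LinearMap.lsmul R E t)) := by
  set Tm : M →ₗ[R] M := LinearMap.lsmul R M t with hTm
  set Te : E →ₗ[R] E := LinearMap.lsmul R E t with hTe
  set K : Submodule R M := ker f with hKdef
  set N : Submodule R E := range f with hNdef
  set TM : Submodule R M := range Tm with hTMdef
  set TE : Submodule R E := range Te with hTEdef
  set TN : Submodule R E := N.map Te with hTNdef
  have hfT : ∀ x : M, f (Tm x) = Te (f x) := by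
    intro x; rw [hTm, hTe, lsmul_apply, lsmul_apply, map_smul]
  have hTN_le_N : TN ≤ N := by
    rintro x ⟨y, hy, rfl⟩
    simpa [hTe] using N.smul_mem t hy
  have hTN_le_TE : TN ≤ TE := map_le_range
  have σ₁ := card_quot_quot' hTN_le_TE
  have σ₂ := card_quot_quot' hTN_le_N
  have hsub_comp : TE.subtype.comp Te.rangeRestrict = Te := by
    ext x; rfl
  have σ₃ : Nat.card (TE ⧸ TN.comap TE.subtype) = Nat.card (E ⧸ N) := by
    set φ : E →ₗ[R] TE ⧸ TN.comap TE.subtype :=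
      (TN.comap TE.subtype).mkQ.comp Te.rangeRestrict with hφ
    have hφsurj : Function.Surjective φ :=
      (Submodule.mkQ_surjective _).comp Te.surjective_rangeRestrict
    have hφker : ker φ = N := by
      rw [hφ, ker_comp, ker_mkQ, ← Submodule.comap_comp, hsub_comp]
      exact Submodule.comap_map_eq_of_injective hinj N
    exact (Nat.card_congr ((Submodule.quotEquivOfEq _ _ hφker.symm).trans
      (LinearMap.quotKerEquivOfSurjective φ hφsurj)).toEquiv).symm
  have hCpos : 0 < Nat.card (E ⧸ N) := Nat.card_pos
  have key1 : Nat.card (N ⧸ TN.comap N.subtype) = Nat.card (E ⧸ TE) := by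
    have := σ₁.symm.trans σ₂
    rw [σ₃] at this
    exact Nat.eq_of_mul_eq_mul_right hCpos (this.symm.trans (mul_comm _ _))
  have hcomap : Submodule.comap f TN = K ⊔ TM := by
    ext x
    rw [Submodule.mem_comap]
    constructor
    · rintro hx
      obtain ⟨y, hy, hxy⟩ := hx
      obtain ⟨m, rfl⟩ := hy
      refine Submodule.mem_sup.mpr ⟨x - Tm m, ?_, Tm m, ⟨m, rfl⟩, by abel⟩
      rw [hKdef, mem_ker, map_sub, hfT, hxy, sub_self]
    · intro hx
      obtain ⟨k, hk, tm, htm, rfl⟩ := Submodule.mem_sup.mp hx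
      obtain ⟨m, rfl⟩ := htm
      rw [map_add, hfT]
      rw [hKdef, mem_ker] at hk
      rw [hk, zero_add]
      exact ⟨f m, ⟨m, rfl⟩, rfl⟩
  have σ₄ : Nat.card (M ⧸ (K ⊔ TM)) = Nat.card (N ⧸ TN.comap N.subtype) := by
    set ψ : M →ₗ[R] N ⧸ TN.comap N.subtype :=
      (TN.comap N.subtype).mkQ.comp f.rangeRestrict with hψ
    have hψsurj : Function.Surjective ψ :=
      (Submodule.mkQ_surjective _).comp f.surjective_rangeRestrict
    have hsub_comp' : N.subtype.comp f.rangeRestrict = f := by ext x; rfl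
    have hψker : ker ψ = K ⊔ TM := by
      rw [hψ, ker_comp, ker_mkQ, ← Submodule.comap_comp, hsub_comp', hcomap]
    exact Nat.card_congr ((Submodule.quotEquivOfEq _ _ hψker.symm).trans
      (LinearMap.quotKerEquivOfSurjective ψ hψsurj)).toEquiv
  have σ₅ := card_quot_quot' (le_sup_right : TM ≤ K ⊔ TM)
  have σ₆ : Nat.card ((K ⊔ TM : Submodule R M) ⧸ TM.comap (K ⊔ TM).subtype)
      = Nat.card (K ⧸ (K ⊓ TM).comap K.subtype) :=
    (Nat.card_congr (LinearMap.quotientInfEquivSupQuotient K TM).toEquiv).symm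
  have σ₇ : K ⊓ TM = Submodule.map Tm K := by
    ext x
    rw [Submodule.mem_inf]
    constructor
    · rintro ⟨hxK, m, rfl⟩
      refine ⟨m, ?_, rfl⟩
      rw [hKdef, mem_ker] at hxK
      rw [SetLike.mem_coe, hKdef, mem_ker]
      rw [hfT] at hxK
      apply hinj
      rw [map_zero]
      exact hxK
    · rintro ⟨k, hk, rfl⟩
      rw [SetLike.mem_coe, hKdef, mem_ker] at hk
      constructor
      · rw [hKdef, mem_ker, hfT, hk, map_zero]
      · exact ⟨k, rfl⟩
  have hstab : ∀ x ∈ K, Tm x ∈ K := by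
    intro x hx
    rw [hKdef, mem_ker] at hx ⊢
    rw [hfT, hx, map_zero]
  have hkerTm_le : ker Tm ≤ K := ker_lsmul_le_ker t f hinj
  have σ₈ : Nat.card (K ⧸ (K ⊓ TM).comap K.subtype) = Nat.card (ker Tm) := by
    haveI : Finite K := hK
    set g : K →ₗ[R] K := Tm.restrict hstab with hg
    have h8a : Nat.card (ker g) = Nat.card (K ⧸ range g) := herbrand_of_finite' g
    have hrg : range g = (Submodule.map Tm K).comap K.subtype := by
      ext x
      simp only [mem_range, Submodule.mem_comap, Submodule.mem_map]
      constructor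
      · rintro ⟨y, rfl⟩
        exact ⟨y, y.2, by rw [hg]; rfl⟩
      · rintro ⟨y, hy, hxy⟩
        exact ⟨⟨y, hy⟩, by apply Subtype.ext; rw [hg]; simpa [LinearMap.restrict_apply] using hxy⟩
    have hkg : ker g = (ker Tm).comap K.subtype := LinearMap.ker_restrict hstab
    have h8b : Nat.card (ker g) = Nat.card (ker Tm) :=
      Nat.card_congr ((LinearEquiv.ofEq _ _ hkg).trans
        (Submodule.comapSubtypeEquivOfLe hkerTm_le)).toEquiv
    rw [← h8b, h8a, σ₇, ← hrg]
  calc Nat.card (M ⧸ TM)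
      = Nat.card ((K ⊔ TM : Submodule R M) ⧸ TM.comap (K ⊔ TM).subtype)
          * Nat.card (M ⧸ (K ⊔ TM)) := σ₅
    _ = Nat.card (ker Tm) * Nat.card (E ⧸ TE) := by rw [σ₆, σ₈, σ₄, key1]

end Herbrand

section PS

open PowerSeries

variable {A : Type*} [CommRing A] [IsDomain A]

private lemma X_mul_mem_span' {P : PowerSeries A} (hP : constantCoeff (R := A) P ≠ 0)
    {g : PowerSeries A} (h : X * g ∈ Ideal.span {P}) : g ∈ Ideal.span {P} := by
  rw [Ideal.mem_span_singleton] at h ⊢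
  obtain ⟨h1, hh⟩ := h
  have hc : constantCoeff (R := A) h1 = 0 := by
    have hcc := congrArg (constantCoeff (R := A)) hh
    simp only [map_mul, constantCoeff_X, zero_mul] at hcc
    rcases mul_eq_zero.mp hcc.symm with h' | h'
    · exact absurd h' hP
    · exact h'
  obtain ⟨h2, rfl⟩ := X_dvd_iff.mpr hc
  refine ⟨h2, mul_left_cancel₀ (X_ne_zero : (X : PowerSeries A) ≠ 0) ?_⟩
  rw [hh]; ring

private lemma isUnit_of_one_sub_X_mul' {P g : PowerSeries A}
    (h : (1 : PowerSeries A) - X * g ∈ Ideal.span {P}) : IsUnit P := by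
  rw [Ideal.mem_span_singleton] at h
  obtain ⟨h1, hh⟩ := h
  rw [isUnit_iff_constantCoeff]
  have hcc := congrArg (constantCoeff (R := A)) hh
  simp only [map_sub, map_mul, map_one, constantCoeff_X, zero_mul, sub_zero] at hcc
  exact IsUnit.of_mul_eq_one _ hcc.symm

end PS

/-- `χ` is a characteristic power series of the finitely generated torsion
`Λ = ℤ_[p][[T]]`-module `M`: by the structure theorem, `M` is pseudo-isomorphic
(i.e. admits a map with finite kernel and cokernel) to an elementary module
`⊕ᵢ Λ/(Pᵢ)` with the `Pᵢ` nonzero, and `χ = ∏ᵢ Pᵢ`. -/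
def IsCharSeries (p : ℕ) [Fact p.Prime] (M : Type*) [AddCommGroup M]
    [Module (PowerSeries ℤ_[p]) M] (χ : PowerSeries ℤ_[p]) : Prop :=
  ∃ (n : ℕ) (P : Fin n → PowerSeries ℤ_[p]),
    (∀ i, P i ≠ 0) ∧ χ = ∏ i, P i ∧
    ∃ f : M →ₗ[PowerSeries ℤ_[p]] (∀ i, PowerSeries ℤ_[p] ⧸ Ideal.span {P i}),
      Finite (LinearMap.ker f) ∧
      Finite ((∀ i, PowerSeries ℤ_[p] ⧸ Ideal.span {P i}) ⧸ LinearMap.range f)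

set_option maxHeartbeats 1000000 in
/-- a finitely generated torsion `Λ`-module `M` with characteristic
power series `χ` satisfying `χ(0) ≠ 0` is finite iff its Herbrand quotient
(for multiplication by `T`) is `1`, i.e. iff `|M[T]| = |M/TM|`. -/
theorem stmt4 (p : ℕ) [Fact p.Prime]
    (M : Type*) [AddCommGroup M] [Module (PowerSeries ℤ_[p]) M]
    [Module.Finite (PowerSeries ℤ_[p]) M]
    (htors : Module.IsTorsion (PowerSeries ℤ_[p]) M)
    (χ : PowerSeries ℤ_[p]) (hχ : IsCharSeries p M χ)
    (h0 : PowerSeries.constantCoeff (R := ℤ_[p]) χ ≠ 0) :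
    Finite M ↔
      Nat.card (LinearMap.ker (LinearMap.lsmul (PowerSeries ℤ_[p]) M PowerSeries.X)) =
        Nat.card (M ⧸ LinearMap.range (LinearMap.lsmul (PowerSeries ℤ_[p]) M PowerSeries.X)) := by
  obtain ⟨n, P, hPne, hchi, f, hKfin, hCfin⟩ := hχ
  have hP0 : ∀ i, PowerSeries.constantCoeff (R := ℤ_[p]) (P i) ≠ 0 := by
    intro i hi
    apply h0
    rw [hchi, map_prod]
    exact Finset.prod_eq_zero (Finset.mem_univ i) hi
  have hinj : Function.Injective (LinearMap.lsmul (PowerSeries ℤ_[p])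
      (∀ i, PowerSeries ℤ_[p] ⧸ Ideal.span {P i}) PowerSeries.X) := by
    rw [← LinearMap.ker_eq_bot, eq_bot_iff]
    intro x hx
    rw [LinearMap.mem_ker, LinearMap.lsmul_apply] at hx
    rw [Submodule.mem_bot]
    funext i
    obtain ⟨g, hg⟩ := Submodule.Quotient.mk_surjective _ (x i)
    have hxi : (PowerSeries.X : PowerSeries ℤ_[p]) • (x i) = 0 := by
      have h2 := congrFun hx i
      rwa [Pi.smul_apply, Pi.zero_apply] at h2
    rw [← hg, ← Submodule.Quotient.mk_smul, smul_eq_mul, Submodule.Quotient.mk_eq_zero] at hxi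
    have hgmem : g ∈ Ideal.span {P i} := X_mul_mem_span' (hP0 i) hxi
    show x i = 0
    rw [← hg, Submodule.Quotient.mk_eq_zero]
    exact hgmem
  have master := herbrand_card PowerSeries.X f hKfin hCfin hinj
  constructor
  · intro hM
    haveI := hM
    exact herbrand_of_finite' _
  · intro h
    haveI : Finite (LinearMap.ker f) := hKfin
    have hle := ker_lsmul_le_ker PowerSeries.X f hinj
    haveI hfin : Finite (LinearMap.ker (LinearMap.lsmul (PowerSeries ℤ_[p]) M PowerSeries.X)) :=
      Finite.of_equiv _ (Submodule.comapSubtypeEquivOfLe hle).toEquiv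
    have hpos : 0 < Nat.card
        (LinearMap.ker (LinearMap.lsmul (PowerSeries ℤ_[p]) M PowerSeries.X)) := Nat.card_pos
    have h1 : Nat.card ((∀ i, PowerSeries ℤ_[p] ⧸ Ideal.span {P i}) ⧸
        LinearMap.range (LinearMap.lsmul (PowerSeries ℤ_[p])
          (∀ i, PowerSeries ℤ_[p] ⧸ Ideal.span {P i}) PowerSeries.X)) = 1 :=
      Nat.eq_of_mul_eq_mul_left hpos
        (((h.trans master).symm).trans (mul_one _).symm)
    haveI hss : Subsingleton ((∀ i, PowerSeries ℤ_[p] ⧸ Ideal.span {P i}) ⧸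
        LinearMap.range (LinearMap.lsmul (PowerSeries ℤ_[p])
          (∀ i, PowerSeries ℤ_[p] ⧸ Ideal.span {P i}) PowerSeries.X)) :=
      (Nat.card_eq_one_iff_unique.mp h1).1
    have htop := Submodule.Quotient.subsingleton_iff.mp hss
    have hsurj : Function.Surjective (LinearMap.lsmul (PowerSeries ℤ_[p])
        (∀ i, PowerSeries ℤ_[p] ⧸ Ideal.span {P i}) PowerSeries.X) :=
      LinearMap.range_eq_top.mp htop
    have hu : ∀ i, IsUnit (P i) := by
      intro i
      classical
      let y : (∀ j, PowerSeries ℤ_[p] ⧸ Ideal.span {P j}) :=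
        Pi.single i (Submodule.Quotient.mk 1)
      obtain ⟨x, hx⟩ := hsurj y
      obtain ⟨g, hg⟩ := Submodule.Quotient.mk_surjective _ (x i)
      have hxi : (PowerSeries.X : PowerSeries ℤ_[p]) • (x i) =
          Submodule.Quotient.mk 1 := by
        rw [LinearMap.lsmul_apply] at hx
        have h3 := congrFun hx i
        rwa [Pi.smul_apply, show y i = Submodule.Quotient.mk 1 from Pi.single_eq_same i _] at h3
      rw [← hg, ← Submodule.Quotient.mk_smul, smul_eq_mul] at hxi
      have hmem := (Submodule.Quotient.eq _).mp hxi
      refine isUnit_of_one_sub_X_mul' (g := g) ?_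
      have := (Ideal.span {P i}).neg_mem hmem
      simpa [neg_sub] using this
    haveI hcomp : ∀ i, Subsingleton (PowerSeries ℤ_[p] ⧸ Ideal.span {P i}) := fun i =>
      Submodule.Quotient.subsingleton_iff.mpr
        (Ideal.span_singleton_eq_top.mpr (hu i))
    haveI : Subsingleton (∀ i, PowerSeries ℤ_[p] ⧸ Ideal.span {P i}) :=
      ⟨fun a b => funext fun i => Subsingleton.elim _ _⟩
    have hKtop : LinearMap.ker f = ⊤ := by
      rw [LinearMap.ker_eq_top]
      exact LinearMap.ext fun x => Subsingleton.elim _ _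
    haveI : Finite (⊤ : Submodule (PowerSeries ℤ_[p]) M) := hKtop ▸ hKfin
    exact Finite.of_equiv (⊤ : Submodule (PowerSeries ℤ_[p]) M)
      (Submodule.topEquiv (R := PowerSeries ℤ_[p]) (M := M)).toEquiv
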